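/- Let A, A_∞ be invertible d×d matrices and suppose ‖A - A_∞‖ is small. For x ≠ 0 and ξ ≠ 0 let θ = ∠(x, A_∞ ξ), α = ∠(x, A ξ), β = ∠(A ξ, A_∞ ξ) (angles between nonzero vectors). Then the directional derivative of cos θ(x, ξ) in x along the direction A ξ equals (|Aξ|/|x|)·(cos β - cos α · cos θ), which can be rewritten as (|Aξ|/|x|)·(sin²θ + (cos β - 1) + cos θ (cos θ - cos α)). -/

import Mathlib

open scoped RealInnerProductSpace

lemma hasFDerivAt_norm_euc {E : Type*} [NormedAddCommGroup E] [InnerProductSpace ℝ E]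
    {x : E} (hx : x ≠ 0) :
    HasFDerivAt (fun y : E => ‖y‖) (‖x‖⁻¹ • innerSL ℝ x) x := by
  have h1 : HasFDerivAt (fun y : E => ‖y‖ ^ 2) (2 • innerSL ℝ x) x :=
    (hasStrictFDerivAt_norm_sq x).hasFDerivAt
  have hx' : ‖x‖ ≠ 0 := norm_ne_zero_iff.mpr hx
  have h2 : HasDerivAt Real.sqrt (1 / (2 * Real.sqrt (‖x‖ ^ 2))) (‖x‖ ^ 2) :=
    Real.hasDerivAt_sqrt (pow_ne_zero 2 hx')
  have h3 := h2.comp_hasFDerivAt x h1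
  simp only [Function.comp_def, Real.sqrt_sq_eq_abs, abs_norm] at h3
  have hc : (1 / (2 * ‖x‖)) • (2 • innerSL ℝ x) = ‖x‖⁻¹ • innerSL ℝ x := by
    ext v
    simp [smul_smul]
    field_simp
  rw [hc] at h3
  exact h3

/-- **Directional derivative of the angle function.**
For invertible matrices `A, A∞`, nonzero `x, ξ`, with
`cos θ = ⟨x, A∞ξ⟩/(|x||A∞ξ|)`, `cos α = ⟨x, Aξ⟩/(|x||Aξ|)`,
`cos β = ⟨Aξ, A∞ξ⟩/(|Aξ||A∞ξ|)`, the derivative of `x ↦ cos θ(x,ξ)` in the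
direction `Aξ` equals `(|Aξ|/|x|)(cos β - cos α cos θ)`, which can be rewritten
as `(|Aξ|/|x|)(sin²θ + (cos β - 1) + cos θ (cos θ - cos α))`. -/
theorem directional_derivative_of_cosine_angle
    {d : ℕ} (hd : 1 ≤ d)
    (A Ainf : Matrix (Fin d) (Fin d) ℝ)
    (hA : IsUnit A) (hAinf : IsUnit Ainf)
    (x ξ : EuclideanSpace ℝ (Fin d)) (hx : x ≠ 0) (hξ : ξ ≠ 0)
    (w winf : EuclideanSpace ℝ (Fin d))
    (hw : w = (WithLp.toLp 2 (A.mulVec ξ) : EuclideanSpace ℝ (Fin d)))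
    (hwinf : winf = (WithLp.toLp 2 (Ainf.mulVec ξ) : EuclideanSpace ℝ (Fin d)))
    (cθ cα cβ : ℝ)
    (hcθ : cθ = (inner ℝ x winf : ℝ) / (‖x‖ * ‖winf‖))
    (hcα : cα = (inner ℝ x w : ℝ) / (‖x‖ * ‖w‖))
    (hcβ : cβ = (inner ℝ w winf : ℝ) / (‖w‖ * ‖winf‖)) :
    fderiv ℝ (fun y : EuclideanSpace ℝ (Fin d) =>
        (inner ℝ y winf : ℝ) / (‖y‖ * ‖winf‖)) x w
      = ‖w‖ / ‖x‖ * (cβ - cα * cθ) ∧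
    ‖w‖ / ‖x‖ * (cβ - cα * cθ)
      = ‖w‖ / ‖x‖ * ((1 - cθ ^ 2) + (cβ - 1) + cθ * (cθ - cα)) := by
  have hwne : w ≠ 0 := by
    rw [hw]; intro h; apply hξ
    have hinj : Function.Injective A.mulVec := Matrix.mulVec_injective_iff_isUnit.mpr hA
    have : A.mulVec ξ = A.mulVec 0 := by
      rw [Matrix.mulVec_zero]; simpa using congrArg WithLp.ofLp h
    simpa using hinj this
  have hwinfne : winf ≠ 0 := by
    rw [hwinf]; intro h; apply hξ
    have hinj : Function.Injective Ainf.mulVec := Matrix.mulVec_injective_iff_isUnit.mpr hAinf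
    have : Ainf.mulVec ξ = Ainf.mulVec 0 := by
      rw [Matrix.mulVec_zero]; simpa using congrArg WithLp.ofLp h
    simpa using hinj this
  have hxn : ‖x‖ ≠ 0 := norm_ne_zero_iff.mpr hx
  have hwn : ‖w‖ ≠ 0 := norm_ne_zero_iff.mpr hwne
  have hwinfn : ‖winf‖ ≠ 0 := norm_ne_zero_iff.mpr hwinfne
  -- numerator derivative
  have hnum : HasFDerivAt (fun y : EuclideanSpace ℝ (Fin d) => (inner ℝ y winf : ℝ))
      (innerSL ℝ winf) x := by
    have heq : (fun y : EuclideanSpace ℝ (Fin d) => (inner ℝ y winf : ℝ))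
        = fun y => innerSL ℝ winf y := funext fun y => real_inner_comm _ _
    rw [heq]; exact (innerSL ℝ winf).hasFDerivAt
  -- denominator derivative
  have hnorm := hasFDerivAt_norm_euc hx
  have hmul : HasFDerivAt (fun y : EuclideanSpace ℝ (Fin d) => ‖y‖ * ‖winf‖)
      (‖winf‖ • ‖x‖⁻¹ • innerSL ℝ x) x := hnorm.mul_const ‖winf‖
  have hinv := (hasDerivAt_inv (mul_ne_zero hxn hwinfn)).comp_hasFDerivAt x hmul
  have hmain := hnum.mul hinv
  simp only [Function.comp_def, Pi.mul_def] at hmain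
  have hfun : (fun y : EuclideanSpace ℝ (Fin d) => (inner ℝ y winf : ℝ) / (‖y‖ * ‖winf‖))
      = fun y => (inner ℝ y winf : ℝ) * (‖y‖ * ‖winf‖)⁻¹ := by
    funext y; rw [div_eq_mul_inv]
  constructor
  · rw [hfun, hmain.fderiv]
    simp only [ContinuousLinearMap.add_apply, ContinuousLinearMap.coe_smul',
      Pi.smul_apply, ContinuousLinearMap.smul_apply, innerSL_apply_apply, smul_eq_mul]
    have h9 : (inner ℝ winf w : ℝ) = inner ℝ w winf := real_inner_comm _ _
    rw [h9, hcθ, hcα, hcβ]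
    field_simp
    ring
  · ring
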